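/- arXiv:2412.08018 — 5 statements merged into one kernel-verified Lean document; each statement's English description precedes it below -/
import Mathlib

section
/- Let R ≥ 1 and let f be a holomorphic function on {z ∈ ℂ : |z| > R} with Laurent expansion f(z) = z + b₀ + Σ_{n≥1} b_n z^{−n}, and suppose f is injective on {z : |z| > R′} for some R′ ≥ R and admits there Grunsky coefficients (α_{mn})_{m,n≥1}, that is, complex numbers with α_{mn} = α_{nm} such that for all z, ζ with |z|, |ζ| > R′ and z ≠ ζ the double series Σ_{m,n≥1} α_{mn} z^{−m} ζ^{−n} converges absolutely and (f(z) − f(ζ))/(z − ζ) = exp(−Σ_{m,n≥1} α_{mn} z^{−m} ζ^{−n}). If for every N ≥ 1 and all complex numbers x₁, …, x_N one has |Σ_{m,n=1}^N √(m n) · α_{mn} · x_m x_n| ≤ Σ_{n=1}^N |x_n|², then f extends to an injective holomorphic function on 𝔻* = {z ∈ ℂ : |z| > 1}, i.e. there is an injective holomorphic F on 𝔻* with F(z) = f(z) for all |z| > max(R′, 1). -/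
open Complex Filter Finset

/-- The exterior disk is preconnected. -/
lemma grunsky_aux_isPreconnected_exterior :
    IsPreconnected {z : ℂ | 1 < ‖z‖} := by
  have h : {z : ℂ | 1 < ‖z‖} =
      (fun p : ℝ × ℝ => (p.1 : ℂ) * Complex.exp (p.2 * Complex.I)) ''
        (Set.Ioi 1 ×ˢ Set.univ) := by
    ext z
    constructor
    · intro hz
      exact ⟨(‖z‖, Complex.arg z), ⟨hz, trivial⟩, by
        simpa using Complex.norm_mul_exp_arg_mul_I z⟩
    · rintro ⟨⟨r, θ⟩, ⟨hr, -⟩, rfl⟩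
      have hr1 : (1 : ℝ) < r := hr
      simp only [Set.mem_setOf_eq, norm_mul, Complex.norm_exp]
      simp only [Complex.mul_re, Complex.ofReal_re, Complex.I_re, Complex.ofReal_im,
        Complex.I_im, mul_zero, mul_one, zero_mul, sub_zero]
      rw [Complex.norm_real, Real.norm_eq_abs, abs_of_pos (lt_trans one_pos hr1)]
      simpa using hr1
  rw [h]
  exact (isPreconnected_Ioi.prod isPreconnected_univ).image _
    (Continuous.continuousOn (by continuity))

set_option maxHeartbeats 1000000 in
/-- A Laurent-type double series with bounded coefficients is holomorphic in the
exterior disk (as a function of the first variable). -/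
lemma grunsky_aux_tsum_diff (c : ℕ × ℕ → ℂ) (hb : ∀ p, ‖c p‖ ≤ 2)
    (w : ℂ) (hw : 1 < ‖w‖) :
    DifferentiableOn ℂ
      (fun z => ∑' p : ℕ × ℕ, c p * (z⁻¹) ^ (p.1 + 1) * (w⁻¹) ^ (p.2 + 1))
      {z : ℂ | 1 < ‖z‖} := by
  intro z₀ hz₀
  have hz₀' : (1 : ℝ) < ‖z₀‖ := hz₀
  set r : ℝ := (1 + ‖z₀‖) / 2 with hrdef
  have hr1 : 1 < r := by simp only [hrdef]; linarith
  have hrz : r < ‖z₀‖ := by simp only [hrdef]; linarith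
  have hr0 : 0 < r := lt_trans one_pos hr1
  have hV : IsOpen {z : ℂ | r < ‖z‖} :=
    isOpen_lt continuous_const continuous_norm
  have hrinv : r⁻¹ < 1 := by
    rw [inv_lt_one_iff₀]; right; exact hr1
  have hwinv : (‖w‖)⁻¹ < 1 := by
    rw [inv_lt_one_iff₀]; right; exact hw
  have hdiff : DifferentiableOn ℂ
      (fun z => ∑' p : ℕ × ℕ, c p * (z⁻¹) ^ (p.1 + 1) * (w⁻¹) ^ (p.2 + 1))
      {z : ℂ | r < ‖z‖} := by
    apply differentiableOn_tsum_of_summable_norm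
      (u := fun p : ℕ × ℕ => (2 * r⁻¹ ^ (p.1 + 1)) * ((‖w‖)⁻¹ ^ (p.2 + 1)))
    · have hf1 : Summable (fun m : ℕ => 2 * r⁻¹ ^ (m + 1)) := by
        have hgeom : Summable (fun m : ℕ => r⁻¹ ^ m) :=
          summable_geometric_of_lt_one (by positivity) hrinv
        apply (hgeom.mul_left (2 * r⁻¹)).congr
        intro m
        rw [pow_succ]
        ring
      have hg1 : Summable (fun n : ℕ => (‖w‖)⁻¹ ^ (n + 1)) := by
        have hgeom : Summable (fun n : ℕ => (‖w‖)⁻¹ ^ n) :=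
          summable_geometric_of_lt_one (by positivity) hwinv
        apply (hgeom.mul_left ((‖w‖)⁻¹)).congr
        intro n
        rw [pow_succ]
        ring
      exact hf1.mul_of_nonneg hg1 (fun m => by positivity) (fun n => by positivity)
    · intro p
      apply DifferentiableOn.mul_const
      apply DifferentiableOn.const_mul
      apply DifferentiableOn.pow
      apply DifferentiableOn.inv differentiableOn_id
      intro x hx
      intro h0
      have hx' : r < ‖x‖ := hx
      rw [h0] at hx'
      simp only [norm_zero] at hx'
      linarith
    · exact hV
    · intro p z hz
      have hz' : r < ‖z‖ := hz
      have h1 : ‖c p * (z⁻¹) ^ (p.1 + 1) * (w⁻¹) ^ (p.2 + 1)‖ =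
          ‖c p‖ * (‖z‖)⁻¹ ^ (p.1 + 1) *
            (‖w‖)⁻¹ ^ (p.2 + 1) := by
        rw [norm_mul, norm_mul, norm_pow, norm_pow, norm_inv, norm_inv]
      rw [h1, mul_assoc, mul_assoc]
      apply mul_le_mul (hb p)
      · apply mul_le_mul _ le_rfl (by positivity) (by positivity)
        apply pow_le_pow_left₀ (by positivity)
        exact inv_anti₀ hr0 hz'.le
      · positivity
      · norm_num
  exact ((hdiff.differentiableAt (hV.mem_nhds hrz)).differentiableWithinAt)

/-- **Grunsky's theorem (sufficiency direction).**  A holomorphic function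
`f(z) = z + b₀ + Σ bₙ z⁻ⁿ` on `{|z| > R}` that is injective on `{|z| > R'}` and whose
Grunsky coefficients there satisfy the Grunsky inequalities extends to an injective
holomorphic function on the whole exterior disk `𝔻* = {|z| > 1}`. -/
theorem grunsky_inequalities_imply_univalent_extension
    (R R' : ℝ) (hR : 1 ≤ R) (hRR' : R ≤ R')
    (f : ℂ → ℂ) (b : ℕ → ℂ) (α : ℕ → ℕ → ℂ)
    (hf : DifferentiableOn ℂ f {z : ℂ | R < ‖z‖})
    (hlaurent : ∀ z : ℂ, R < ‖z‖ →
      HasSum (fun n : ℕ => b (n + 1) * (z⁻¹) ^ (n + 1)) (f z - z - b 0))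
    (hinj : Set.InjOn f {z : ℂ | R' < ‖z‖})
    (hsym : ∀ m n : ℕ, 1 ≤ m → 1 ≤ n → α m n = α n m)
    (hgrunsky : ∀ z ζ : ℂ, R' < ‖z‖ → R' < ‖ζ‖ → z ≠ ζ →
      Summable (fun p : ℕ × ℕ =>
        ‖α (p.1 + 1) (p.2 + 1)‖ *
          ‖z‖⁻¹ ^ (p.1 + 1) * ‖ζ‖⁻¹ ^ (p.2 + 1)) ∧
      ∃ S : ℂ,
        HasSum (fun p : ℕ × ℕ =>
          α (p.1 + 1) (p.2 + 1) * (z⁻¹) ^ (p.1 + 1) * (ζ⁻¹) ^ (p.2 + 1)) S ∧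
        (f z - f ζ) / (z - ζ) = Complex.exp (-S))
    (hineq : ∀ N : ℕ, 1 ≤ N → ∀ x : ℕ → ℂ,
      ‖∑ m ∈ Finset.Icc 1 N, ∑ n ∈ Finset.Icc 1 N,
          (Real.sqrt ((m : ℝ) * (n : ℝ)) : ℂ) * α m n * x m * x n‖
        ≤ ∑ n ∈ Finset.Icc 1 N, ‖x n‖ ^ 2) :
    ∃ F : ℂ → ℂ,
      DifferentiableOn ℂ F {z : ℂ | 1 < ‖z‖} ∧
      Set.InjOn F {z : ℂ | 1 < ‖z‖} ∧
      ∀ z : ℂ, max R' 1 < ‖z‖ → F z = f z := by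
  classical
  have hR'1 : (1 : ℝ) ≤ R' := le_trans hR hRR'
  have hmax : max R' 1 = R' := max_eq_left hR'1
  set U : Set ℂ := {z : ℂ | 1 < ‖z‖} with hUdef
  have hUopen : IsOpen U := isOpen_lt continuous_const continuous_norm
  have hUconn : IsPreconnected U := grunsky_aux_isPreconnected_exterior
  -- R' exterior points are in U
  have hR'U : ∀ z : ℂ, R' < ‖z‖ → z ∈ U := fun z hz =>
    lt_of_le_of_lt hR'1 hz
  -- Step 1: diagonal bound
  have hdiag : ∀ k : ℕ, 1 ≤ k → (k : ℝ) * ‖α k k‖ ≤ 1 := by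
    intro k hk
    have hk' : k ∈ Finset.Icc 1 k := Finset.mem_Icc.2 ⟨hk, le_rfl⟩
    set x : ℕ → ℂ := fun j => if j = k then 1 else 0 with hxdef
    have h := hineq k hk x
    have e1 : ∀ m ∈ Finset.Icc 1 k,
        ∑ n ∈ Finset.Icc 1 k,
          (Real.sqrt ((m : ℝ) * (n : ℝ)) : ℂ) * α m n * x m * x n
        = (Real.sqrt ((m : ℝ) * (k : ℝ)) : ℂ) * α m k * x m := by
      intro m hm
      rw [Finset.sum_eq_single_of_mem k hk']
      · simp [hxdef]
      · intro nn hnn hne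
        simp [hxdef, hne]
    rw [Finset.sum_congr rfl e1, Finset.sum_eq_single_of_mem k hk'
      (fun bb hbb hbne => by simp [hxdef, hbne]),
      Finset.sum_eq_single_of_mem k hk'
      (fun bb hbb hbne => by simp [hxdef, hbne])] at h
    simp only [hxdef, if_pos rfl, mul_one, norm_one, one_pow] at h
    have hsqrt : Real.sqrt ((k : ℝ) * (k : ℝ)) = (k : ℝ) :=
      Real.sqrt_mul_self (by positivity)
    calc (k : ℝ) * ‖α k k‖
        = ‖(Real.sqrt ((k : ℝ) * (k : ℝ)) : ℂ) * α k k‖ := by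
          rw [norm_mul, Complex.norm_of_nonneg (Real.sqrt_nonneg _), hsqrt]
      _ ≤ 1 := h
  -- Step 2: off-diagonal bound
  have hoff : ∀ k l : ℕ, 1 ≤ k → 1 ≤ l → k ≠ l →
      Real.sqrt ((k : ℝ) * (l : ℝ)) * ‖α k l‖ ≤ 2 := by
    intro k l hk hl hkl
    set N := max k l with hNdef
    have hN : 1 ≤ N := le_trans hk (le_max_left _ _)
    have hkN : k ∈ Finset.Icc 1 N := Finset.mem_Icc.2 ⟨hk, le_max_left _ _⟩
    have hlN : l ∈ Finset.Icc 1 N := Finset.mem_Icc.2 ⟨hl, le_max_right _ _⟩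
    set x : ℕ → ℂ := fun j => if j = k ∨ j = l then 1 else 0 with hxdef
    have h := hineq N hN x
    have e1 : ∀ m ∈ Finset.Icc 1 N,
        ∑ n ∈ Finset.Icc 1 N,
          (Real.sqrt ((m : ℝ) * (n : ℝ)) : ℂ) * α m n * x m * x n
        = (Real.sqrt ((m : ℝ) * (k : ℝ)) : ℂ) * α m k * x m
          + (Real.sqrt ((m : ℝ) * (l : ℝ)) : ℂ) * α m l * x m := by
      intro m hm
      rw [Finset.sum_eq_add_of_mem k l hkN hlN hkl]
      · simp [hxdef]
        try ring
      · intro cc hcc ⟨hc1, hc2⟩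
        simp [hxdef, hc1, hc2]
    rw [Finset.sum_congr rfl e1, Finset.sum_eq_add_of_mem k l hkN hlN hkl
      (fun cc hcc ⟨hc1, hc2⟩ => by simp [hxdef, hc1, hc2]),
      Finset.sum_eq_add_of_mem k l hkN hlN hkl
      (fun cc hcc ⟨hc1, hc2⟩ => by simp [hxdef, hc1, hc2, norm_zero]; try ring)] at h
    simp only [hxdef, if_pos (Or.inl rfl), if_pos (Or.inr rfl), mul_one] at h
    -- h : abs (√(kk) α k k + √(kl) α k l + (√(lk) α l k + √(ll) α l l)) ≤ abs 1 ^2 + abs 1^2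
    have hxk : ‖(1 : ℂ)‖ ^ 2 = 1 := by simp
    have hsym' : α l k = α k l := hsym l k hl hk
    have hlk : Real.sqrt ((l : ℝ) * (k : ℝ)) = Real.sqrt ((k : ℝ) * (l : ℝ)) := by
      rw [mul_comm]
    have hABCD : ‖(Real.sqrt ((k : ℝ) * (k : ℝ)) : ℂ) * α k k
          + (Real.sqrt ((k : ℝ) * (l : ℝ)) : ℂ) * α k l
          + ((Real.sqrt ((l : ℝ) * (k : ℝ)) : ℂ) * α l k
          + (Real.sqrt ((l : ℝ) * (l : ℝ)) : ℂ) * α l l)‖ ≤ 2 := by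
      calc _ ≤ ‖(1:ℂ)‖ ^ 2 + ‖(1:ℂ)‖ ^ 2 := h
        _ = 2 := by norm_num
    -- 2 √(kl) α k l = total - √(kk) α k k - √(ll) α l l
    have key : (2 : ℂ) * ((Real.sqrt ((k : ℝ) * (l : ℝ)) : ℂ) * α k l)
        = ((Real.sqrt ((k : ℝ) * (k : ℝ)) : ℂ) * α k k
          + (Real.sqrt ((k : ℝ) * (l : ℝ)) : ℂ) * α k l
          + ((Real.sqrt ((l : ℝ) * (k : ℝ)) : ℂ) * α l k
          + (Real.sqrt ((l : ℝ) * (l : ℝ)) : ℂ) * α l l))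
          - (Real.sqrt ((k : ℝ) * (k : ℝ)) : ℂ) * α k k
          - (Real.sqrt ((l : ℝ) * (l : ℝ)) : ℂ) * α l l := by
      rw [hsym', hlk]; push_cast; ring
    have hdk : ‖(Real.sqrt ((k : ℝ) * (k : ℝ)) : ℂ) * α k k‖ ≤ 1 := by
      rw [norm_mul, Complex.norm_of_nonneg (Real.sqrt_nonneg _),
        Real.sqrt_mul_self (by positivity)]
      exact hdiag k hk
    have hdl : ‖(Real.sqrt ((l : ℝ) * (l : ℝ)) : ℂ) * α l l‖ ≤ 1 := by
      rw [norm_mul, Complex.norm_of_nonneg (Real.sqrt_nonneg _),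
        Real.sqrt_mul_self (by positivity)]
      exact hdiag l hl
    have h2 : ‖(2 : ℂ) * ((Real.sqrt ((k : ℝ) * (l : ℝ)) : ℂ) * α k l)‖ ≤ 4 := by
      rw [key]
      calc ‖_ - _ - _‖
          ≤ ‖_ - _‖ + ‖(Real.sqrt ((l : ℝ) * (l : ℝ)) : ℂ) * α l l‖ :=
            norm_sub_le _ _
        _ ≤ (‖_‖ + ‖(Real.sqrt ((k : ℝ) * (k : ℝ)) : ℂ) * α k k‖)
            + ‖(Real.sqrt ((l : ℝ) * (l : ℝ)) : ℂ) * α l l‖ := by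
            gcongr
            exact norm_sub_le _ _
        _ ≤ 2 + 1 + 1 := by gcongr
        _ = 4 := by norm_num
    have h3 : 2 * (Real.sqrt ((k : ℝ) * (l : ℝ)) * ‖α k l‖) ≤ 4 := by
      calc 2 * (Real.sqrt ((k : ℝ) * (l : ℝ)) * ‖α k l‖)
          = ‖(2 : ℂ) * ((Real.sqrt ((k : ℝ) * (l : ℝ)) : ℂ) * α k l)‖ := by
            rw [norm_mul, norm_mul, Complex.norm_of_nonneg (Real.sqrt_nonneg _)]
            simp
        _ ≤ 4 := h2
    linarith
  -- Step 3: uniform bound |α (m+1) (n+1)| ≤ 2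
  have habs2 : ∀ p : ℕ × ℕ, ‖α (p.1 + 1) (p.2 + 1)‖ ≤ 2 := by
    rintro ⟨m, n⟩
    simp only
    by_cases hmn : m + 1 = n + 1
    · rw [hmn]
      have h := hdiag (n + 1) (Nat.le_add_left 1 n)
      have hn1 : (1 : ℝ) ≤ (((n + 1 : ℕ)) : ℝ) := by
        exact_mod_cast Nat.succ_le_succ (Nat.zero_le n)
      have hmul := mul_le_mul_of_nonneg_right hn1 (norm_nonneg (α (n+1) (n+1)))
      rw [one_mul] at hmul
      linarith
    · have h := hoff (m + 1) (n + 1) (Nat.le_add_left 1 m) (Nat.le_add_left 1 n) hmn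
      have h0m : (0:ℝ) ≤ (m:ℝ) := Nat.cast_nonneg m
      have h0n : (0:ℝ) ≤ (n:ℝ) := Nat.cast_nonneg n
      have hs1 : (1 : ℝ) ≤ Real.sqrt (((m+1 : ℕ) : ℝ) * ((n+1 : ℕ) : ℝ)) := by
        rw [show ((1:ℝ)) = Real.sqrt 1 from (Real.sqrt_one).symm]
        apply Real.sqrt_le_sqrt
        push_cast
        nlinarith
      have hmul := mul_le_mul_of_nonneg_right hs1 (norm_nonneg (α (m+1) (n+1)))
      rw [one_mul] at hmul
      linarith
  -- The analytic continuation of the Grunsky series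
  set φ : ℂ → ℂ → ℂ := fun z ζ =>
    ∑' p : ℕ × ℕ, α (p.1 + 1) (p.2 + 1) * (z⁻¹) ^ (p.1 + 1) * (ζ⁻¹) ^ (p.2 + 1) with hφdef
  have hφz : ∀ ζ : ℂ, 1 < ‖ζ‖ → DifferentiableOn ℂ (fun z => φ z ζ) U :=
    fun ζ hζ => grunsky_aux_tsum_diff (fun p => α (p.1 + 1) (p.2 + 1)) habs2 ζ hζ
  have hφζ : ∀ z : ℂ, 1 < ‖z‖ → DifferentiableOn ℂ (fun ζ => φ z ζ) U := by
    intro z hz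
    have hswap : (fun ζ => φ z ζ) = fun ζ =>
        ∑' p : ℕ × ℕ, (fun q : ℕ × ℕ => α (q.2 + 1) (q.1 + 1)) p *
          (ζ⁻¹) ^ (p.1 + 1) * (z⁻¹) ^ (p.2 + 1) := by
      funext ζ
      have := (Equiv.prodComm ℕ ℕ).tsum_eq
        (fun p : ℕ × ℕ => α (p.1 + 1) (p.2 + 1) * (z⁻¹) ^ (p.1 + 1) * (ζ⁻¹) ^ (p.2 + 1))
      calc φ z ζ = ∑' p : ℕ × ℕ, (fun p : ℕ × ℕ =>
            α (p.1 + 1) (p.2 + 1) * (z⁻¹) ^ (p.1 + 1) * (ζ⁻¹) ^ (p.2 + 1))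
            ((Equiv.prodComm ℕ ℕ) p) := this.symm
        _ = _ := by
            apply tsum_congr
            rintro ⟨a, c⟩
            simp only [Equiv.prodComm_apply, Prod.swap_prod_mk]
            ring
    rw [hswap]
    exact grunsky_aux_tsum_diff (fun q : ℕ × ℕ => α (q.2 + 1) (q.1 + 1))
      (fun p => habs2 ⟨p.2, p.1⟩) z hz
  -- The Grunsky identity in terms of φ
  have heq : ∀ z ζ : ℂ, R' < ‖z‖ → R' < ‖ζ‖ → z ≠ ζ →
      f z - f ζ = (z - ζ) * Complex.exp (-(φ z ζ)) := by
    intro z ζ hz hζ hne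
    obtain ⟨-, S, hS, hdiv⟩ := hgrunsky z ζ hz hζ hne
    have hφS : φ z ζ = S := hS.tsum_eq
    rw [hφS]
    have hzζ : z - ζ ≠ 0 := sub_ne_zero.2 hne
    field_simp at hdiv
    rw [hdiv]
  -- base point
  set ζ₀ : ℂ := ((R' + 1 : ℝ) : ℂ) with hζ₀def
  have habsζ₀ : ‖ζ₀‖ = R' + 1 := by
    rw [hζ₀def, Complex.norm_real, Real.norm_eq_abs, abs_of_pos (by linarith)]
  have hζ₀R' : R' < ‖ζ₀‖ := by rw [habsζ₀]; linarith
  have hζ₀U : 1 < ‖ζ₀‖ := by rw [habsζ₀]; linarith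
  -- the extension
  set F : ℂ → ℂ := fun z => f ζ₀ + (z - ζ₀) * Complex.exp (-(φ z ζ₀)) with hFdef
  have hFdiff : DifferentiableOn ℂ F U := by
    apply DifferentiableOn.add (differentiableOn_const _)
    exact (differentiableOn_id.sub (differentiableOn_const _)).mul
      ((hφz ζ₀ hζ₀U).neg.cexp)
  have hFanalytic : AnalyticOnNhd ℂ F U := hFdiff.analyticOnNhd hUopen
  -- F = f away from ζ₀
  have hFf : ∀ z : ℂ, R' < ‖z‖ → z ≠ ζ₀ → F z = f z := by
    intro z hz hne
    rw [hFdef]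
    simp only
    rw [← heq z ζ₀ hz hζ₀R' hne]
    ring
  -- Step A : for each ζ with |ζ| > R',  F z - f ζ = (z - ζ) exp(-φ z ζ) on U
  have key1 : ∀ ζ : ℂ, R' < ‖ζ‖ →
      Set.EqOn (fun z => F z - f ζ) (fun z => (z - ζ) * Complex.exp (-(φ z ζ))) U := by
    intro ζ hζ
    have hζU : 1 < ‖ζ‖ := lt_of_le_of_lt hR'1 hζ
    have hG1 : AnalyticOnNhd ℂ (fun z => F z - f ζ) U :=
      (hFdiff.sub (differentiableOn_const _)).analyticOnNhd hUopen
    have hG2 : AnalyticOnNhd ℂ (fun z => (z - ζ) * Complex.exp (-(φ z ζ))) U :=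
      ((differentiableOn_id.sub (differentiableOn_const _)).mul
        ((hφz ζ hζU).neg.cexp)).analyticOnNhd hUopen
    set z₀ : ℂ := ((‖ζ‖ + R' + 1 : ℝ) : ℂ) with hz₀def
    have habsz₀ : ‖z₀‖ = ‖ζ‖ + R' + 1 := by
      rw [hz₀def, Complex.norm_real, Real.norm_eq_abs, abs_of_pos (by positivity)]
    have hz₀R' : R' < ‖z₀‖ := by
      rw [habsz₀]
      have := norm_nonneg ζ
      linarith
    have hz₀U : z₀ ∈ U := lt_of_le_of_lt hR'1 hz₀R'
    set W : Set ℂ := {z : ℂ | R' < ‖z‖} \ {ζ, ζ₀} with hWdef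
    have hWopen : IsOpen W := by
      apply IsOpen.sdiff (isOpen_lt continuous_const continuous_norm)
      exact ((Set.finite_singleton ζ₀).insert ζ).isClosed
    have hz₀W : z₀ ∈ W := by
      constructor
      · exact hz₀R'
      · intro hmem
        rcases hmem with h | h
        · have : ‖z₀‖ = ‖ζ‖ := by rw [h]
          rw [habsz₀] at this
          linarith
        · have : ‖z₀‖ = ‖ζ₀‖ := by
            rw [Set.mem_singleton_iff.1 h]
          rw [habsz₀, habsζ₀] at this
          have := norm_pos_iff.2 (show ζ ≠ 0 by
            intro h0; rw [h0] at hζU; simp at hζU; linarith)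
          linarith
    apply AnalyticOnNhd.eqOn_of_preconnected_of_eventuallyEq hG1 hG2 hUconn hz₀U
    apply Filter.eventuallyEq_of_mem (hWopen.mem_nhds hz₀W)
    rintro z ⟨hz, hznot⟩
    have hzζ : z ≠ ζ := fun h => hznot (Or.inl h)
    have hzζ₀ : z ≠ ζ₀ := fun h => hznot (Or.inr (Set.mem_singleton_iff.2 h))
    simp only
    rw [hFf z hz hzζ₀, heq z ζ hz hζ hzζ]
  -- F = f on {|z| > R'}
  have hFext : ∀ z : ℂ, R' < ‖z‖ → F z = f z := by
    intro z hz
    have hzU : z ∈ U := lt_of_le_of_lt hR'1 hz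
    set ζ' : ℂ := ((‖z‖ + R' + 1 : ℝ) : ℂ) with hζ'def
    have habsζ' : ‖ζ'‖ = ‖z‖ + R' + 1 := by
      rw [hζ'def, Complex.norm_real, Real.norm_eq_abs, abs_of_pos (by positivity)]
    have hζ'R' : R' < ‖ζ'‖ := by
      rw [habsζ']
      have := norm_nonneg z
      linarith
    have hzζ' : z ≠ ζ' := by
      intro h
      have : ‖z‖ = ‖ζ'‖ := by rw [h]
      rw [habsζ'] at this
      linarith
    have h1 := key1 ζ' hζ'R' hzU
    have h2 := heq z ζ' hz hζ'R' hzζ'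
    simp only at h1
    have h3 : F z - f ζ' = f z - f ζ' := by rw [h1, ← h2]
    have h4 := congrArg (fun t => t + f ζ') h3
    simpa using h4
  -- Step B : F z - F ζ = (z - ζ) exp(-φ z ζ) for z, ζ ∈ U
  have key2 : ∀ z ∈ U, ∀ ζ ∈ U,
      F z - F ζ = (z - ζ) * Complex.exp (-(φ z ζ)) := by
    intro z hz ζ hζ
    have hz' : 1 < ‖z‖ := hz
    have hH1 : AnalyticOnNhd ℂ (fun ζ => F z - F ζ) U :=
      ((differentiableOn_const _).sub hFdiff).analyticOnNhd hUopen
    have hH2 : AnalyticOnNhd ℂ (fun ζ => (z - ζ) * Complex.exp (-(φ z ζ))) U :=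
      (((differentiableOn_const _).sub differentiableOn_id).mul
        ((hφζ z hz').neg.cexp)).analyticOnNhd hUopen
    set ζ₁ : ℂ := ((‖z‖ + R' + 1 : ℝ) : ℂ) with hζ₁def
    have habsζ₁ : ‖ζ₁‖ = ‖z‖ + R' + 1 := by
      rw [hζ₁def, Complex.norm_real, Real.norm_eq_abs, abs_of_pos (by positivity)]
    have hζ₁R' : R' < ‖ζ₁‖ := by
      rw [habsζ₁]
      have := norm_nonneg z
      linarith
    have hζ₁U : ζ₁ ∈ U := lt_of_le_of_lt hR'1 hζ₁R'
    set W' : Set ℂ := {w : ℂ | R' < ‖w‖} \ {z} with hW'def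
    have hW'open : IsOpen W' :=
      IsOpen.sdiff (isOpen_lt continuous_const continuous_norm) isClosed_singleton
    have hζ₁W' : ζ₁ ∈ W' := by
      refine ⟨hζ₁R', ?_⟩
      intro h
      have : ‖ζ₁‖ = ‖z‖ := by
        rw [Set.mem_singleton_iff.1 h]
      rw [habsζ₁] at this
      linarith
    have := AnalyticOnNhd.eqOn_of_preconnected_of_eventuallyEq hH1 hH2 hUconn hζ₁U
      (by
        apply Filter.eventuallyEq_of_mem (hW'open.mem_nhds hζ₁W')
        rintro w ⟨hw, hwz⟩
        simp only
        rw [hFext w hw]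
        exact key1 w hw hz) hζ
    simpa using this
  refine ⟨F, hFdiff, ?_, ?_⟩
  · -- injectivity
    intro z hz ζ hζ hFeq
    have h := key2 z hz ζ hζ
    rw [hFeq, sub_self] at h
    have := (mul_eq_zero.1 h.symm).resolve_right (Complex.exp_ne_zero _)
    exact sub_eq_zero.1 this
  · intro z hz
    rw [hmax] at hz
    exact hFext z hz
end

section
/- Let A : ℕ × ℕ → ℂ be a symmetric matrix (A_{mn} = A_{nm} for all m, n) and suppose the quantity κ := sup{ |Σ_{m,n} A_{mn} x_m x_n| : x : ℕ → ℂ finitely supported with Σ_n |x_n|² = 1 } is finite. Then A induces a bounded linear operator on ℓ²: for every finitely supported x one has Σ_m |Σ_n A_{mn} x_n|² ≤ κ² · Σ_n |x_n|²; moreover κ is the least constant with this property, i.e. the supremum of the modulus of the quadratic form of A over the unit sphere of finitely supported sequences equals the ℓ²-operator norm of A. -/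
open Complex Finset

noncomputable def myN (x : ℕ →₀ ℂ) : ℝ := ∑ n ∈ x.support, ‖x n‖ ^ 2

noncomputable def myAp (A : ℕ → ℕ → ℂ) (x : ℕ →₀ ℂ) (m : ℕ) : ℂ :=
  ∑ n ∈ x.support, A m n * x n

noncomputable def myQ (A : ℕ → ℕ → ℂ) (x : ℕ →₀ ℂ) : ℂ :=
  ∑ m ∈ x.support, ∑ n ∈ x.support, A m n * x m * x n

lemma myN_nonneg (x : ℕ →₀ ℂ) : 0 ≤ myN x :=
  Finset.sum_nonneg fun _ _ => sq_nonneg _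

lemma myN_ext (x : ℕ →₀ ℂ) {S : Finset ℕ} (h : x.support ⊆ S) :
    myN x = ∑ n ∈ S, ‖x n‖ ^ 2 :=
  Finset.sum_subset h fun n _ hn => by
    simp [Finsupp.notMem_support_iff.mp hn]

lemma myAp_ext (A : ℕ → ℕ → ℂ) (x : ℕ →₀ ℂ) {S : Finset ℕ} (h : x.support ⊆ S) (m : ℕ) :
    myAp A x m = ∑ n ∈ S, A m n * x n :=
  Finset.sum_subset h fun n _ hn => by
    simp [Finsupp.notMem_support_iff.mp hn]

lemma myQ_ext (A : ℕ → ℕ → ℂ) (x : ℕ →₀ ℂ) {S : Finset ℕ} (h : x.support ⊆ S) :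
    myQ A x = ∑ m ∈ S, ∑ n ∈ S, A m n * x m * x n := by
  unfold myQ
  rw [Finset.sum_subset h (fun m _ hm => by
    simp [Finsupp.notMem_support_iff.mp hm])]
  exact Finset.sum_congr rfl fun m _ => Finset.sum_subset h fun n _ hn => by
    simp [Finsupp.notMem_support_iff.mp hn]

lemma myN_eq_zero {x : ℕ →₀ ℂ} (h : myN x = 0) : x = 0 := by
  ext n
  by_contra hn
  have hmem : n ∈ x.support := Finsupp.mem_support_iff.mpr (by simpa using hn)
  have h1 : ‖x n‖ ^ 2 ≤ 0 := h ▸ Finset.single_le_sum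
    (f := fun n => ‖x n‖ ^ 2) (fun i _ => sq_nonneg _) hmem
  have : x n ≠ 0 := by simpa using hn
  nlinarith [sq_nonneg (‖x n‖), norm_pos_iff.mpr this]

lemma myQ_bound (A : ℕ → ℕ → ℂ) (κ : ℝ)
    (hub : ∀ x : ℕ →₀ ℂ, myN x = 1 → ‖myQ A x‖ ≤ κ)
    (x : ℕ →₀ ℂ) : ‖myQ A x‖ ≤ κ * myN x := by
  by_cases hx : x = 0
  · simp [hx, myQ, myN]
  · have hN : 0 < myN x := by
      rcases (myN_nonneg x).lt_or_eq with h | h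
      · exact h
      · exact absurd (myN_eq_zero h.symm) hx
    set c : ℝ := (Real.sqrt (myN x))⁻¹ with hc
    have hc0 : 0 < c := inv_pos.mpr (Real.sqrt_pos.mpr hN)
    have hcsq : c ^ 2 = (myN x)⁻¹ := by
      rw [hc, ← Real.sqrt_inv]
      exact Real.sq_sqrt (by positivity)
    set y : ℕ →₀ ℂ := (c : ℂ) • x with hy
    have hys : y.support ⊆ x.support := Finsupp.support_smul
    have hyapp : ∀ n, y n = (c : ℂ) * x n := fun n => rfl
    have hNy : myN y = 1 := by
      rw [myN_ext y hys]
      rw [Finset.sum_congr rfl fun n _ => (by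
        rw [hyapp, norm_mul, Complex.norm_real, Real.norm_eq_abs, abs_of_pos hc0, mul_pow] :
        ‖y n‖ ^ 2 = c ^ 2 * ‖x n‖ ^ 2), ← Finset.mul_sum]
      rw [hcsq]
      exact inv_mul_cancel₀ hN.ne'
    have hQy : myQ A y = (c : ℂ) ^ 2 * myQ A x := by
      rw [myQ_ext A y hys]
      unfold myQ
      rw [Finset.mul_sum]
      refine Finset.sum_congr rfl fun m _ => ?_
      rw [Finset.mul_sum]
      refine Finset.sum_congr rfl fun n _ => ?_
      simp only [hyapp]; ring
    have h1 := hub y hNy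
    rw [hQy, norm_mul, norm_pow, Complex.norm_real, Real.norm_eq_abs, abs_of_pos hc0, hcsq] at h1
    rw [inv_mul_le_iff₀ hN] at h1
    linarith [h1]

lemma bilinear_bound (A : ℕ → ℕ → ℂ) (hsym : ∀ m n : ℕ, A m n = A n m) (κ : ℝ)
    (hQ : ∀ x : ℕ →₀ ℂ, ‖myQ A x‖ ≤ κ * myN x)
    (x y : ℕ →₀ ℂ) {S : Finset ℕ} (hx : x.support ⊆ S) (hy : y.support ⊆ S) :
    ‖∑ m ∈ S, ∑ n ∈ S, A m n * x m * y n‖ ≤ κ / 2 * (myN x + myN y) := by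
  set B : ℂ := ∑ m ∈ S, ∑ n ∈ S, A m n * x m * y n with hB
  have hadd : (x + y).support ⊆ S :=
    Finsupp.support_add.trans (Finset.union_subset hx hy)
  have hsub : (x - y).support ⊆ S :=
    Finsupp.support_sub.trans (Finset.union_subset hx hy)
  have hswap : ∑ m ∈ S, ∑ n ∈ S, A m n * y m * x n = B := by
    rw [hB, Finset.sum_comm]
    refine Finset.sum_congr rfl fun m _ => Finset.sum_congr rfl fun n _ => ?_
    rw [hsym n m]; ring
  have hpolar : myQ A (x + y) - myQ A (x - y) = 4 * B := by
    rw [myQ_ext A _ hadd, myQ_ext A _ hsub, ← Finset.sum_sub_distrib]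
    have : ∀ m ∈ S, ((∑ n ∈ S, A m n * (x + y) m * (x + y) n) -
        ∑ n ∈ S, A m n * (x - y) m * (x - y) n)
        = ∑ n ∈ S, (2 * (A m n * x m * y n) + 2 * (A m n * y m * x n)) := by
      intro m _
      rw [← Finset.sum_sub_distrib]
      refine Finset.sum_congr rfl fun n _ => ?_
      simp only [Finsupp.add_apply, Finsupp.sub_apply]
      ring
    rw [Finset.sum_congr rfl this]
    simp only [Finset.sum_add_distrib, ← Finset.mul_sum]
    rw [hswap, ← hB]
    ring
  have hpar : myN (x + y) + myN (x - y) = 2 * myN x + 2 * myN y := by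
    rw [myN_ext _ hadd, myN_ext _ hsub, myN_ext x hx, myN_ext y hy,
      ← Finset.sum_add_distrib]
    have : ∀ n ∈ S, ‖(x + y) n‖ ^ 2 + ‖(x - y) n‖ ^ 2
        = 2 * ‖x n‖ ^ 2 + 2 * ‖y n‖ ^ 2 := by
      intro n _
      simp only [Finsupp.add_apply, Finsupp.sub_apply, Complex.sq_norm,
        Complex.normSq_apply, Complex.add_re, Complex.add_im, Complex.sub_re,
        Complex.sub_im]
      ring
    rw [Finset.sum_congr rfl this]
    simp only [Finset.sum_add_distrib, ← Finset.mul_sum]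
  have h4 : 4 * ‖B‖ ≤ κ * (2 * myN x + 2 * myN y) := by
    calc 4 * ‖B‖ = ‖4 * B‖ := by
          rw [norm_mul]; norm_num
      _ = ‖myQ A (x + y) - myQ A (x - y)‖ := by rw [hpolar]
      _ ≤ ‖myQ A (x + y)‖ + ‖myQ A (x - y)‖ :=
          norm_sub_le _ _
      _ ≤ κ * myN (x + y) + κ * myN (x - y) := add_le_add (hQ _) (hQ _)
      _ = κ * (2 * myN x + 2 * myN y) := by rw [← mul_add, hpar]
  linarith

lemma finite_estimate (A : ℕ → ℕ → ℂ) (hsym : ∀ m n : ℕ, A m n = A n m) (κ : ℝ)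
    (hQ : ∀ x : ℕ →₀ ℂ, ‖myQ A x‖ ≤ κ * myN x)
    (x : ℕ →₀ ℂ) (S : Finset ℕ) :
    ∑ m ∈ S, ‖myAp A x m‖ ^ 2 ≤ κ ^ 2 * myN x := by
  set t : ℝ := ∑ m ∈ S, ‖myAp A x m‖ ^ 2 with ht
  have ht0 : 0 ≤ t := Finset.sum_nonneg fun _ _ => sq_nonneg _
  rcases ht0.lt_or_eq with htpos | hteq
  swap
  · rw [← hteq]; exact mul_nonneg (sq_nonneg κ) (myN_nonneg x)
  have hx0 : x ≠ 0 := by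
    rintro rfl
    have : t = 0 := by
      rw [ht]
      refine Finset.sum_eq_zero fun m _ => ?_
      simp [myAp]
    exact absurd this htpos.ne'
  have hN : 0 < myN x := by
    rcases (myN_nonneg x).lt_or_eq with h | h
    · exact h
    · exact absurd (myN_eq_zero h.symm) hx0
  set lam : ℝ := Real.sqrt (myN x / t) with hlam
  have hlam0 : 0 < lam := Real.sqrt_pos.mpr (by positivity)
  have hlamsq : lam ^ 2 = myN x / t := Real.sq_sqrt (by positivity)
  set y : ℕ →₀ ℂ := Finsupp.onFinset S
      (fun m => if m ∈ S then (lam : ℂ) * (starRingEnd ℂ) (myAp A x m) else 0)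
      (fun a ha => by by_contra h; exact ha (if_neg h)) with hydef
  have hyS : y.support ⊆ S := Finsupp.support_onFinset_subset
  have hyapp : ∀ m ∈ S, y m = (lam : ℂ) * (starRingEnd ℂ) (myAp A x m) := by
    intro m hm
    show (if m ∈ S then _ else 0) = _
    rw [if_pos hm]
  set T : Finset ℕ := S ∪ x.support with hT
  have hST : S ⊆ T := Finset.subset_union_left
  have hxT : x.support ⊆ T := Finset.subset_union_right
  have hyT : y.support ⊆ T := hyS.trans hST
  have hBval : ∑ m ∈ T, ∑ n ∈ T, A m n * y m * x n = ((lam * t : ℝ) : ℂ) := by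
    have h1 : ∀ m, ∑ n ∈ T, A m n * y m * x n = y m * myAp A x m := by
      intro m
      rw [myAp_ext A x hxT, Finset.mul_sum]
      exact Finset.sum_congr rfl fun n _ => by ring
    rw [Finset.sum_congr rfl fun m _ => h1 m]
    rw [← Finset.sum_subset hST (fun m _ hm => by
      have : y m = 0 := Finsupp.notMem_support_iff.mp fun hc => hm (hyS hc)
      rw [this, zero_mul])]
    have h2 : ∀ m ∈ S, y m * myAp A x m
        = (lam : ℂ) * ((‖myAp A x m‖ ^ 2 : ℝ) : ℂ) := by
      intro m hm
      rw [hyapp m hm]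
      rw [mul_assoc]
      congr 1
      rw [← Complex.normSq_eq_conj_mul_self, ← Complex.sq_norm]
    rw [Finset.sum_congr rfl h2, ← Finset.mul_sum, ht]
    push_cast
    ring
  have hNy : myN y = lam ^ 2 * t := by
    rw [myN_ext y hyS, ht, Finset.mul_sum]
    refine Finset.sum_congr rfl fun m hm => ?_
    rw [hyapp m hm, norm_mul, Complex.norm_real, Real.norm_eq_abs, Complex.norm_conj,
      abs_of_pos hlam0, mul_pow]
  have hb := bilinear_bound A hsym κ hQ y x hyT hxT
  rw [hBval] at hb
  rw [Complex.norm_real, Real.norm_eq_abs, _root_.abs_of_nonneg (mul_nonneg hlam0.le ht0)] at hb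
  rw [hNy] at hb
  have hkey : lam ^ 2 * t = myN x := by
    rw [hlamsq]; field_simp
  rw [hkey] at hb
  have hb' : lam * t ≤ κ * myN x := by linarith
  have hsq : lam ^ 2 * t ^ 2 ≤ κ ^ 2 * myN x ^ 2 := by
    nlinarith [mul_pos hlam0 htpos]
  have : t * myN x ≤ κ ^ 2 * myN x ^ 2 := by nlinarith
  nlinarith

/-- **Quadratic form norm equals operator norm for symmetric matrices.**
If `A` is a symmetric complex matrix whose quadratic form is bounded (with supremum `κ`)
on the unit sphere of finitely supported sequences, then `A` induces a bounded operator
on `ℓ²` with `Σ_m |(Ax)_m|² ≤ κ²·Σ_n |xₙ|²`, and `κ` is the least such constant. -/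
theorem symmetric_matrix_quadratic_form_eq_operator_norm
    (A : ℕ → ℕ → ℂ) (hsym : ∀ m n : ℕ, A m n = A n m) (κ : ℝ)
    (hκ : IsLUB {r : ℝ | ∃ x : ℕ →₀ ℂ,
        (∑ n ∈ x.support, ‖x n‖ ^ 2) = 1 ∧
        r = ‖∑ m ∈ x.support, ∑ n ∈ x.support, A m n * x m * x n‖} κ) :
    (∀ x : ℕ →₀ ℂ,
      Summable (fun m : ℕ => ‖∑ n ∈ x.support, A m n * x n‖ ^ 2) ∧
      (∑' m : ℕ, ‖∑ n ∈ x.support, A m n * x n‖ ^ 2)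
        ≤ κ ^ 2 * ∑ n ∈ x.support, ‖x n‖ ^ 2) ∧
    (∀ C : ℝ, 0 ≤ C →
      (∀ x : ℕ →₀ ℂ,
        (∑' m : ℕ, ‖∑ n ∈ x.support, A m n * x n‖ ^ 2)
          ≤ C ^ 2 * ∑ n ∈ x.support, ‖x n‖ ^ 2) →
      κ ≤ C) := by
  have hub : ∀ x : ℕ →₀ ℂ, myN x = 1 → ‖myQ A x‖ ≤ κ := fun x h =>
    hκ.1 ⟨x, h, rfl⟩
  have hQ1 := myQ_bound A κ hub
  have hfin := finite_estimate A hsym κ hQ1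
  have hsummable : ∀ x : ℕ →₀ ℂ, Summable (fun m => ‖myAp A x m‖ ^ 2) :=
    fun x => summable_of_sum_range_le (fun m => sq_nonneg _)
      (fun n => hfin x (Finset.range n))
  have htsum : ∀ x : ℕ →₀ ℂ, (∑' m, ‖myAp A x m‖ ^ 2) ≤ κ ^ 2 * myN x :=
    fun x => Real.tsum_le_of_sum_range_le (fun m => sq_nonneg _)
      (fun n => hfin x (Finset.range n))
  refine ⟨fun x => ⟨hsummable x, htsum x⟩, ?_⟩
  intro C hC hCx
  refine hκ.2 ?_
  rintro r ⟨x, hx1, rfl⟩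
  show ‖myQ A x‖ ≤ C
  have hNx1 : myN x = 1 := hx1
  have hQx : myQ A x = ∑ m ∈ x.support, x m * myAp A x m := by
    unfold myQ myAp
    refine Finset.sum_congr rfl fun m _ => ?_
    rw [Finset.mul_sum]
    exact Finset.sum_congr rfl fun n _ => by ring
  have h1 : ‖myQ A x‖
      ≤ ∑ m ∈ x.support, ‖x m‖ * ‖myAp A x m‖ := by
    rw [hQx]
    refine (norm_sum_le _ _).trans_eq ?_
    exact Finset.sum_congr rfl fun m _ => norm_mul _ _
  have h2 := Finset.sum_mul_sq_le_sq_mul_sq x.support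
    (fun m => ‖x m‖) (fun m => ‖myAp A x m‖)
  have h3 : ∑ m ∈ x.support, ‖myAp A x m‖ ^ 2 ≤ C ^ 2 := by
    have hle : ∑ m ∈ x.support, ‖myAp A x m‖ ^ 2
        ≤ ∑' m, ‖myAp A x m‖ ^ 2 :=
      Summable.sum_le_tsum x.support (fun i _ => sq_nonneg _) (hsummable x)
    have := hCx x
    rw [show (∑ n ∈ x.support, ‖x n‖ ^ 2) = myN x from rfl, hNx1,
      mul_one] at this
    exact hle.trans this
  have h4 : (∑ m ∈ x.support, ‖x m‖ * ‖myAp A x m‖) ^ 2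
      ≤ C ^ 2 := by
    calc (∑ m ∈ x.support, ‖x m‖ * ‖myAp A x m‖) ^ 2
        ≤ (∑ m ∈ x.support, ‖x m‖ ^ 2)
          * ∑ m ∈ x.support, ‖myAp A x m‖ ^ 2 := h2
      _ = myN x * ∑ m ∈ x.support, ‖myAp A x m‖ ^ 2 := rfl
      _ = ∑ m ∈ x.support, ‖myAp A x m‖ ^ 2 := by rw [hNx1, one_mul]
      _ ≤ C ^ 2 := h3
  have h5 : 0 ≤ ∑ m ∈ x.support, ‖x m‖ * ‖myAp A x m‖ :=
    Finset.sum_nonneg fun m _ => mul_nonneg (norm_nonneg _) (norm_nonneg _)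
  nlinarith [h1, h4, h5]
end

section
/- Let f be an injective holomorphic function on 𝔻* = {z ∈ ℂ : |z| > 1} such that f(z) ≠ 0 for all z ∈ 𝔻* and f(z) − z → b₀ as |z| → ∞ for some constant b₀. Then for every integer p ≥ 2 there exists an injective holomorphic function g on 𝔻* (the p-th root transform of f) such that g(z)^p = f(z^p) for all z ∈ 𝔻*, g(z)/z → 1 as |z| → ∞, and g is p-symmetric: g(ε z) = ε g(z) for every p-th root of unity ε and all z ∈ 𝔻*. -/
open Complex Filter


open Complex Filter MeasureTheory intervalIntegral Set Metric

/-- Existence of a holomorphic logarithm on the unit ball for a zero-free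
holomorphic function with value `1` at the centre. -/
lemma exists_log_ball (φ : ℂ → ℂ)
    (hφ : DifferentiableOn ℂ φ (Metric.ball (0:ℂ) 1))
    (hne : ∀ w ∈ Metric.ball (0:ℂ) 1, φ w ≠ 0) (h0 : φ 0 = 1) :
    ∃ ψ : ℂ → ℂ, DifferentiableOn ℂ ψ (Metric.ball (0:ℂ) 1) ∧ ψ 0 = 0 ∧
      ∀ w ∈ Metric.ball (0:ℂ) 1, Complex.exp (ψ w) = φ w := by
  set B : Set ℂ := Metric.ball (0:ℂ) 1 with hB
  have hBo : IsOpen B := Metric.isOpen_ball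
  have hφa : ∀ w ∈ B, AnalyticAt ℂ φ w := fun w hw => hφ.analyticAt (hBo.mem_nhds hw)
  set h : ℂ → ℂ := fun w => deriv φ w / φ w with hh_def
  have hderiv : ∀ w ∈ B, DifferentiableAt ℂ (deriv φ) w := fun w hw =>
    (((hφ.analyticOnNhd hBo).deriv) w hw).differentiableAt
  have hh : ∀ w ∈ B, DifferentiableAt ℂ h w := fun w hw =>
    (hderiv w hw).div (hφ.differentiableAt (hBo.mem_nhds hw)) (hne w hw)
  have hhc : ContinuousOn h B := fun w hw => ((hh w hw).continuousAt).continuousWithinAt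
  set c : ℝ → ℝ := fun t => min (max t 0) 1 with hc_def
  have hc_cont : Continuous c := (continuous_id.max continuous_const).min continuous_const
  have hc_mem : ∀ t, c t ∈ Set.Icc (0:ℝ) 1 :=
    fun t => ⟨le_min (le_max_right _ _) zero_le_one, min_le_right _ _⟩
  have hc_eq : ∀ t ∈ Set.Icc (0:ℝ) 1, c t = t := by
    intro t ht
    simp [hc_def, max_eq_left ht.1, min_eq_left ht.2]
  have hmem : ∀ (t : ℝ) (w : ℂ), w ∈ B → ((c t : ℝ) : ℂ) * w ∈ B := by
    intro t w hw
    rw [hB, mem_ball_zero_iff] at hw ⊢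
    have h1 : ‖((c t : ℝ) : ℂ)‖ ≤ 1 := by
      rw [Complex.norm_real]
      rw [Real.norm_eq_abs, _root_.abs_of_nonneg (hc_mem t).1]
      exact (hc_mem t).2
    calc ‖((c t : ℝ) : ℂ) * w‖ = ‖((c t : ℝ) : ℂ)‖ * ‖w‖ := norm_mul _ _
    _ ≤ 1 * ‖w‖ := by gcongr
    _ < 1 := by simpa using hw
  set ψ : ℂ → ℂ := fun w => ∫ t in (0:ℝ)..1, w * h (((c t : ℝ) : ℂ) * w) with hψ_def
  -- pointwise identity
  have key : ∀ w ∈ B, Complex.exp (ψ w) = φ w := by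
    intro w hw
    set k : ℝ → ℂ := fun t => w * h (((c t : ℝ) : ℂ) * w) with hk_def
    have hmap : Continuous fun t : ℝ => ((c t : ℝ) : ℂ) * w :=
      (Complex.continuous_ofReal.comp hc_cont).mul continuous_const
    have hk_cont : Continuous k :=
      continuous_const.mul (hhc.comp_continuous hmap (fun t => hmem t w hw))
    set u : ℝ → ℂ := fun s => ∫ t in (0:ℝ)..s, k t with hu_def
    have hu : ∀ s : ℝ, HasDerivAt u (k s) s := by
      intro s
      exact intervalIntegral.integral_hasDerivAt_right (hk_cont.intervalIntegrable _ _)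
        (hk_cont.stronglyMeasurable.stronglyMeasurableAtFilter) hk_cont.continuousAt
    set v : ℝ → ℂ := fun s => φ ((s : ℂ) * w) * Complex.exp (-u s) with hv_def
    have hsw : ∀ s ∈ Set.Icc (0:ℝ) 1, (s : ℂ) * w ∈ B := by
      intro s hs
      have := hmem s w hw
      rwa [hc_eq s hs] at this
    have hv : ∀ s ∈ Set.Icc (0:ℝ) 1, HasDerivAt v 0 s := by
      intro s hs
      have h1 : HasDerivAt (fun s : ℝ => (s : ℂ) * w) w s := by
        simpa using (Complex.ofRealCLM.hasDerivAt (x := s)).mul_const w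
      have h2 : HasDerivAt φ (deriv φ ((s:ℂ)*w)) ((s:ℂ)*w) :=
        (hφ.differentiableAt (hBo.mem_nhds (hsw s hs))).hasDerivAt
      have h12 : HasDerivAt (fun s : ℝ => φ ((s:ℂ)*w)) (w * deriv φ ((s:ℂ)*w)) s := by
        have := (h2.hasFDerivAt.restrictScalars ℝ).comp_hasDerivAt s h1; exact this
      have h3 : HasDerivAt (fun s : ℝ => Complex.exp (-u s)) (Complex.exp (-u s) * (-k s)) s :=
        (hu s).neg.cexp
      have h4 := h12.mul h3
      have hks : k s = w * (deriv φ ((s:ℂ)*w) / φ ((s:ℂ)*w)) := by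
        rw [hk_def]; simp only [hc_eq s hs, hh_def]
      have hφs := hne _ (hsw s hs)
      refine h4.congr_deriv (Eq.symm ?_)
      rw [hks]
      have hd : deriv φ ((s:ℂ)*w) / φ ((s:ℂ)*w) * φ ((s:ℂ)*w) = deriv φ ((s:ℂ)*w) :=
        div_mul_cancel₀ _ hφs
      linear_combination (w * Complex.exp (-u s)) * hd
    have hconst := constant_of_has_deriv_right_zero
      (fun s hs => (hv s hs).continuousAt.continuousWithinAt)
      (fun s hs => ((hv s (Set.mem_Icc_of_Ico hs)).hasDerivWithinAt))
      (x := 1) (Set.right_mem_Icc.mpr zero_le_one)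
    have hv0 : v 0 = 1 := by
      simp [hv_def, hu_def, h0]
    have hv1 : v 1 = φ w * Complex.exp (-ψ w) := by
      simp only [hv_def, Complex.ofReal_one, one_mul]
      rfl
    rw [hv1, hv0] at hconst
    have hexp := Complex.exp_ne_zero (ψ w)
    rw [Complex.exp_neg] at hconst
    field_simp at hconst
    exact hconst.symm
  -- continuity
  have hψc : ContinuousOn ψ B := by
    rw [continuousOn_iff_continuous_restrict]
    have : Continuous (Function.uncurry (fun (x : B) (t : ℝ) => (x : ℂ) * h (((c t : ℝ) : ℂ) * (x : ℂ)))) := by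
      apply Continuous.mul
      · exact continuous_subtype_val.comp continuous_fst
      · apply hhc.comp_continuous
        · exact (Complex.continuous_ofReal.comp (hc_cont.comp continuous_snd)).mul
            (continuous_subtype_val.comp continuous_fst)
        · rintro ⟨⟨x, hx⟩, t⟩
          exact hmem t x hx
    exact continuous_parametric_intervalIntegral_of_continuous' this 0 1
  -- holomorphy
  have hψd : DifferentiableOn ℂ ψ B := by
    intro w0 hw0
    have hψca : ContinuousAt ψ w0 := hψc.continuousAt (hBo.mem_nhds hw0)
    set a : ℂ := Complex.exp (-ψ w0) with ha_def
    set ℓ : ℂ → ℂ := fun w => ψ w0 + Complex.log (φ w * a) with hℓ_def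
    have hφw0 : φ w0 * a = 1 := by
      rw [ha_def, ← key w0 hw0, ← Complex.exp_add]
      simp
    have hφc : ContinuousAt (fun w => φ w * a) w0 :=
      ((hφ.differentiableAt (hBo.mem_nhds hw0)).continuousAt).mul_const a
    have hslit : ∀ᶠ w in nhds w0, φ w * a ∈ Complex.slitPlane := by
      apply hφc.eventually_mem
      rw [hφw0]
      exact Complex.isOpen_slitPlane.mem_nhds (by simp [Complex.mem_slitPlane_iff])
    have hℓd : DifferentiableAt ℂ ℓ w0 := by
      apply DifferentiableAt.const_add
      exact (Complex.differentiableAt_log (by rw [hφw0]; simp [Complex.mem_slitPlane_iff])).comp w0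
        ((hφ.differentiableAt (hBo.mem_nhds hw0)).mul_const a)
    have hℓc : ContinuousAt ℓ w0 := hℓd.continuousAt
    have hd0 : ψ w0 - ℓ w0 = 0 := by
      simp [hℓ_def, hφw0, Complex.log_one]
    have hev : ∀ᶠ w in nhds w0, ψ w = ℓ w := by
      have hcont : ContinuousAt (fun w => ψ w - ℓ w) w0 := hψca.sub hℓc
      have hsmall : ∀ᶠ w in nhds w0, ‖ψ w - ℓ w‖ < 1 := by
        have := hcont.eventually_mem (Metric.ball_mem_nhds (ψ w0 - ℓ w0) one_pos)
        filter_upwards [this] with w hwb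
        rw [hd0] at hwb
        simpa [dist_eq_norm] using hwb
      have hBev : ∀ᶠ w in nhds w0, w ∈ B := hBo.mem_nhds hw0
      filter_upwards [hsmall, hBev, hslit] with w hwsmall hwB hwslit
      have hexpd : Complex.exp (ψ w - ℓ w) = 1 := by
        rw [Complex.exp_sub, key w hwB, hℓ_def]
        rw [Complex.exp_add, Complex.exp_log (Complex.slitPlane_ne_zero hwslit)]
        have hexpψ0 : Complex.exp (ψ w0) * a = 1 := by
          rw [ha_def, ← Complex.exp_add]; simp
        have hden : Complex.exp (ψ w0) * (φ w * a) = φ w := by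
          calc Complex.exp (ψ w0) * (φ w * a) = φ w * (Complex.exp (ψ w0) * a) := by ring
          _ = φ w := by rw [hexpψ0, mul_one]
        rw [hden, div_self (hne w hwB)]
      obtain ⟨n, hn⟩ := Complex.exp_eq_one_iff.mp hexpd
      have : ‖(n : ℂ) * (2 * Real.pi * Complex.I)‖ < 1 := hn ▸ hwsmall
      have hnorm : ‖(n : ℂ) * (2 * Real.pi * Complex.I)‖ = |(n:ℝ)| * (2 * Real.pi) := by
        rw [norm_mul, norm_mul, norm_mul]
        simp [Complex.norm_real, _root_.abs_of_nonneg Real.pi_pos.le]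
      rw [hnorm] at this
      have hn0 : n = 0 := by
        by_contra hne'
        have h1le : (1:ℝ) ≤ |(n:ℝ)| := by
          rw [← Int.cast_abs]
          exact_mod_cast Int.one_le_abs hne'
        nlinarith [Real.pi_gt_three]
      rw [hn0] at hn
      have : ψ w - ℓ w = 0 := by simpa using hn
      exact sub_eq_zero.mp this
    exact (hℓd.congr_of_eventuallyEq hev).differentiableWithinAt
  refine ⟨ψ, hψd, ?_, key⟩
  simp [hψ_def]


/-- **Existence of the `p`-th root transform.**  If `f` is an injective, zero-free
holomorphic function on `𝔻* = {|z| > 1}` with `f(z) − z → b₀` as `|z| → ∞`, then for every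
`p ≥ 2` there is an injective holomorphic `g` on `𝔻*` with `g(z)^p = f(z^p)`,
`g(z)/z → 1` at `∞`, and `g(εz) = ε·g(z)` for every `p`-th root of unity `ε`. -/
theorem root_transform_exists
    (f : ℂ → ℂ) (b₀ : ℂ)
    (hf : DifferentiableOn ℂ f {z : ℂ | 1 < ‖z‖})
    (hinj : Set.InjOn f {z : ℂ | 1 < ‖z‖})
    (hne : ∀ z : ℂ, 1 < ‖z‖ → f z ≠ 0)
    (hnorm : Tendsto (fun z => f z - z) (comap (fun z : ℂ => ‖z‖) atTop) (nhds b₀)) :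
    ∀ p : ℕ, 2 ≤ p →
      ∃ g : ℂ → ℂ,
        DifferentiableOn ℂ g {z : ℂ | 1 < ‖z‖} ∧
        Set.InjOn g {z : ℂ | 1 < ‖z‖} ∧
        (∀ z : ℂ, 1 < ‖z‖ → g z ^ p = f (z ^ p)) ∧
        Tendsto (fun z => g z / z) (comap (fun z : ℂ => ‖z‖) atTop) (nhds 1) ∧
        (∀ ε : ℂ, ε ^ p = 1 → ∀ z : ℂ, 1 < ‖z‖ → g (ε * z) = ε * g z) := by
  intro p hp
  set U : Set ℂ := {z : ℂ | 1 < ‖z‖} with hU_def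
  have hUo : IsOpen U := isOpen_lt continuous_const continuous_norm
  set B : Set ℂ := Metric.ball (0:ℂ) 1 with hB_def
  have hBo : IsOpen B := Metric.isOpen_ball
  have hBmem : ∀ w : ℂ, w ∈ B ↔ ‖w‖ < 1 := by
    intro w; rw [hB_def, mem_ball_zero_iff]
  have hinvU : ∀ w : ℂ, w ∈ B → w ≠ 0 → w⁻¹ ∈ U := by
    intro w hw hw0
    rw [hBmem] at hw
    have hpos : 0 < ‖w‖ := by
      simpa [norm_pos_iff] using hw0
    simp only [hU_def, Set.mem_setOf_eq, norm_inv]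
    exact (one_lt_inv₀ hpos).mpr hw
  set φ : ℂ → ℂ := fun w => if w = 0 then 1 else w * f w⁻¹ with hφ_def
  have hφ0 : φ 0 = 1 := by simp [hφ_def]
  have hφ_ne : ∀ w ∈ B, φ w ≠ 0 := by
    intro w hw
    by_cases h : w = 0
    · simp [hφ_def, h]
    · rw [hφ_def]
      simp only [if_neg h]
      exact mul_ne_zero h (hne _ (hinvU w hw h))
  have hφd_pt : ∀ w : ℂ, w ∈ B → w ≠ 0 → DifferentiableAt ℂ φ w := by
    intro w hw hw0
    have hev : φ =ᶠ[nhds w] fun w => w * f w⁻¹ := by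
      filter_upwards [isOpen_compl_singleton.mem_nhds (by simpa using hw0 :
        w ∈ ({0}ᶜ : Set ℂ))] with z hz
      simp [hφ_def, if_neg (by simpa using hz : z ≠ 0)]
    have hd : DifferentiableAt ℂ (fun w : ℂ => w * f w⁻¹) w := by
      apply differentiableAt_fun_id.mul
      exact (hf.differentiableAt (hUo.mem_nhds (hinvU w hw hw0))).comp w (differentiableAt_inv hw0)
    exact hd.congr_of_eventuallyEq hev
  -- limit of w * f w⁻¹ at 0
  have hinvT : Tendsto (fun w : ℂ => w⁻¹) (nhdsWithin 0 {(0:ℂ)}ᶜ) (comap (fun z : ℂ => ‖z‖) atTop) := by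
    rw [tendsto_comap_iff]
    have h1 : Tendsto (fun w : ℂ => ‖w‖) (nhdsWithin 0 {(0:ℂ)}ᶜ) (nhdsWithin 0 (Set.Ioi 0)) := by
      apply tendsto_nhdsWithin_of_tendsto_nhds_of_eventually_within
      · simpa using (continuous_norm.tendsto (0:ℂ)).mono_left nhdsWithin_le_nhds
      · filter_upwards [self_mem_nhdsWithin] with w hw
        simpa [norm_pos_iff] using (hw : w ≠ 0)
    have h2 : Tendsto (fun x : ℝ => x⁻¹) (nhdsWithin 0 (Set.Ioi 0)) atTop := tendsto_inv_nhdsGT_zero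
    have := h2.comp h1
    refine this.congr ?_
    intro w; simp [Function.comp, norm_inv]
  have hlim1 : Tendsto φ (nhdsWithin 0 {(0:ℂ)}ᶜ) (nhds 1) := by
    have ht0 : Tendsto (fun w : ℂ => w) (nhdsWithin 0 {(0:ℂ)}ᶜ) (nhds 0) :=
      tendsto_id.mono_left nhdsWithin_le_nhds
    have hcomp : Tendsto (fun w : ℂ => f w⁻¹ - w⁻¹) (nhdsWithin 0 {(0:ℂ)}ᶜ) (nhds b₀) :=
      hnorm.comp hinvT
    have hmul : Tendsto (fun w : ℂ => w * (f w⁻¹ - w⁻¹) + 1) (nhdsWithin 0 {(0:ℂ)}ᶜ)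
        (nhds (0 * b₀ + 1)) := ((ht0.mul hcomp).add tendsto_const_nhds)
    rw [zero_mul, zero_add] at hmul
    refine hmul.congr' ?_
    filter_upwards [self_mem_nhdsWithin] with w hw
    have hw0 : w ≠ 0 := hw
    rw [hφ_def]
    simp only [if_neg hw0]
    rw [mul_sub, mul_inv_cancel₀ hw0]
    ring
  have hφc0 : ContinuousAt φ 0 := by
    rw [ContinuousAt, hφ0]
    rw [← nhdsNE_sup_pure 0]
    rw [tendsto_sup]
    refine ⟨hlim1, ?_⟩
    rw [tendsto_pure_left]
    intro s hs
    rw [← hφ0] at hs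
    exact mem_of_mem_nhds hs
  have hφB : DifferentiableOn ℂ φ B := by
    intro w hw
    by_cases h : w = 0
    · subst h
      have hev : ∀ᶠ z in nhdsWithin 0 {(0:ℂ)}ᶜ, DifferentiableAt ℂ φ z := by
        have hBn : B ∈ nhdsWithin (0:ℂ) {(0:ℂ)}ᶜ :=
          mem_nhdsWithin_of_mem_nhds (hBo.mem_nhds hw)
        filter_upwards [hBn, self_mem_nhdsWithin] with z hz hz0
        exact hφd_pt z hz hz0
      exact ((Complex.analyticAt_of_differentiable_on_punctured_nhds_of_continuousAt
        hev hφc0).differentiableAt).differentiableWithinAt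
    · exact (hφd_pt w hw h).differentiableWithinAt
  obtain ⟨ψ, hψd, hψ0, hψkey⟩ := exists_log_ball φ hφB hφ_ne hφ0
  have hp0 : (p : ℂ) ≠ 0 := Nat.cast_ne_zero.mpr (by omega)
  have hppos : 0 < p := by omega
  set g : ℂ → ℂ := fun z => z * Complex.exp (ψ ((z ^ p)⁻¹) / p) with hg_def
  -- membership facts
  have hzU : ∀ z : ℂ, 1 < ‖z‖ → z ^ p ∈ U := by
    intro z hz
    show 1 < ‖z ^ p‖
    rw [norm_pow]
    exact one_lt_pow₀ (a := ‖z‖) hz (by omega)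
  have hzB : ∀ z : ℂ, 1 < ‖z‖ → (z ^ p)⁻¹ ∈ B := by
    intro z hz
    rw [hBmem, norm_inv]
    have : 1 < ‖z ^ p‖ := hzU z hz
    exact inv_lt_one_of_one_lt₀ this
  have hz0 : ∀ z : ℂ, 1 < ‖z‖ → z ≠ 0 := by
    intro z hz h0
    rw [h0] at hz; simp at hz; exact absurd hz (by norm_num)
  have hzp0 : ∀ z : ℂ, 1 < ‖z‖ → z ^ p ≠ 0 := fun z hz => pow_ne_zero p (hz0 z hz)
  -- symmetry
  have hsym : ∀ ε : ℂ, ε ^ p = 1 → ∀ z : ℂ, 1 < ‖z‖ → g (ε * z) = ε * g z := by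
    intro ε hε z hz
    rw [hg_def]
    simp only
    rw [mul_pow, hε, one_mul]
    ring
  -- power identity
  have hpow : ∀ z : ℂ, 1 < ‖z‖ → g z ^ p = f (z ^ p) := by
    intro z hz
    rw [hg_def]
    simp only
    rw [mul_pow, ← Complex.exp_nat_mul, mul_div_cancel₀ _ hp0,
      hψkey _ (hzB z hz)]
    rw [hφ_def]
    simp only [if_neg (inv_ne_zero (hzp0 z hz)), inv_inv]
    rw [← mul_assoc, mul_inv_cancel₀ (hzp0 z hz), one_mul]
  -- zero-freeness of g
  have hg_ne : ∀ z : ℂ, 1 < ‖z‖ → g z ≠ 0 :=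
    fun z hz => mul_ne_zero (hz0 z hz) (Complex.exp_ne_zero _)
  -- differentiability
  have hgd : DifferentiableOn ℂ g U := by
    intro z hz
    have hz' : 1 < ‖z‖ := hz
    apply DifferentiableWithinAt.mul differentiableWithinAt_id
    apply DifferentiableAt.differentiableWithinAt
    apply Complex.differentiableAt_exp.comp
    apply DifferentiableAt.div_const
    have h1 : DifferentiableAt ℂ (fun z : ℂ => (z ^ p)⁻¹) z :=
      (differentiableAt_inv (hzp0 z hz')).comp z (differentiableAt_pow p)
    exact (hψd.differentiableAt (hBo.mem_nhds (hzB z hz'))).comp z h1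
  -- injectivity
  have hginj : Set.InjOn g U := by
    intro z1 h1 z2 h2 heq
    have h1' : 1 < ‖z1‖ := h1
    have h2' : 1 < ‖z2‖ := h2
    have hfe : f (z1 ^ p) = f (z2 ^ p) := by
      rw [← hpow z1 h1', ← hpow z2 h2', heq]
    have hpe : z1 ^ p = z2 ^ p := hinj (hzU z1 h1') (hzU z2 h2') hfe
    set ε : ℂ := z2 / z1 with hε_def
    have hεp : ε ^ p = 1 := by
      rw [hε_def, div_pow, ← hpe, div_self (hzp0 z1 h1')]
    have hz2e : z2 = ε * z1 := by
      rw [hε_def, div_mul_cancel₀ _ (hz0 z1 h1')]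
    have : g z2 = ε * g z1 := by
      rw [hz2e]; exact hsym ε hεp z1 h1'
    rw [← heq] at this
    have hε1 : ε = 1 := by
      have h5 : (1 : ℂ) * g z1 = ε * g z1 := by rw [one_mul]; exact this
      exact (mul_right_cancel₀ (hg_ne z1 h1') h5).symm
    rw [hz2e, hε1, one_mul]
  -- limit
  have hglim : Tendsto (fun z => g z / z) (comap (fun z : ℂ => ‖z‖) atTop) (nhds 1) := by
    have habs : Tendsto (fun z : ℂ => ‖z‖) (comap (fun z : ℂ => ‖z‖) atTop) atTop := tendsto_comap
    have hev : ∀ᶠ z in comap (fun z : ℂ => ‖z‖) atTop, 1 < ‖z‖ :=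
      habs.eventually (eventually_gt_atTop 1)
    have h1 : Tendsto (fun z : ℂ => (z ^ p)⁻¹) (comap (fun z : ℂ => ‖z‖) atTop) (nhds 0) := by
      rw [tendsto_zero_iff_norm_tendsto_zero]
      have h2 : Tendsto (fun z : ℂ => ‖z‖ ^ p) (comap (fun z : ℂ => ‖z‖) atTop) atTop :=
        (tendsto_pow_atTop (by omega : p ≠ 0)).comp habs
      have := h2.inv_tendsto_atTop
      refine this.congr ?_
      intro z
      simp [norm_inv, norm_pow]
    have hψc : ContinuousAt ψ 0 :=
      (hψd.differentiableAt (hBo.mem_nhds (by simp [hB_def]))).continuousAt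
    have h3 : Tendsto (fun z : ℂ => Complex.exp (ψ ((z ^ p)⁻¹) / p)) (comap (fun z : ℂ => ‖z‖) atTop)
        (nhds 1) := by
      have h4 : Tendsto (fun z : ℂ => ψ ((z ^ p)⁻¹) / p) (comap (fun z : ℂ => ‖z‖) atTop)
          (nhds (ψ 0 / p)) := (hψc.tendsto.comp h1).div_const _
      rw [hψ0, zero_div] at h4
      have := (Complex.continuous_exp.continuousAt (x := 0)).tendsto.comp h4
      simpa [Function.comp_def] using this
    refine h3.congr' ?_
    filter_upwards [hev] with z hz
    rw [hg_def]
    simp only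
    rw [mul_comm, mul_div_assoc, div_self (hz0 z hz), mul_one]
  exact ⟨g, hgd, hginj, hpow, hglim, hsym⟩
end

section
/- Let p ≥ 1 be an integer and t ∈ ℂ with |t| ≤ 1. Define G : 𝔻 → ℂ by G(z) = z · exp(−(2/p) · Log(1 + t z^p)), where Log is the principal branch of the logarithm (well defined since |t z^p| < 1 for |z| < 1, so Re(1 + t z^p) > 0). Then G is injective on the unit disk 𝔻 = {z : |z| < 1}, and G(z)^p = z^p / (1 + t z^p)² for all z ∈ 𝔻, i.e. G is the p-th root transform of the univalent function F(w) = w/(1 + t w)². -/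
open Complex

/-- **The root transform of the Koebe-type function `w/(1+tw)²`.**  For `p ≥ 1` and
`|t| ≤ 1`, the function `G(z) = z·exp(−(2/p)·Log(1 + t zᵖ))` (principal logarithm) is
injective on the unit disk and satisfies `G(z)^p = z^p/(1 + t z^p)²`, i.e. `G` is the
`p`-th root transform of `F(w) = w/(1+tw)²`. -/
theorem root_transform_koebe_type
    (p : ℕ) (hp : 1 ≤ p) (t : ℂ) (ht : ‖t‖ ≤ 1) :
    Set.InjOn (fun z : ℂ => z * Complex.exp (-(2 / (p : ℂ)) * Complex.log (1 + t * z ^ p)))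
      (Metric.ball (0 : ℂ) 1) ∧
    ∀ z ∈ Metric.ball (0 : ℂ) 1,
      (z * Complex.exp (-(2 / (p : ℂ)) * Complex.log (1 + t * z ^ p))) ^ p
        = z ^ p / (1 + t * z ^ p) ^ 2 := by
  have hp0 : (p : ℂ) ≠ 0 := by
    exact Nat.cast_ne_zero.mpr (by omega)
  have hsmall : ∀ z : ℂ, z ∈ Metric.ball (0 : ℂ) 1 → ‖t * z ^ p‖ < 1 := by
    intro z hz
    rw [mem_ball_zero_iff] at hz
    have h1 : ‖z‖ ^ p < 1 := pow_lt_one₀ (norm_nonneg z) hz (by omega)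
    calc ‖t * z ^ p‖ = ‖t‖ * ‖z‖ ^ p := by
          rw [norm_mul, norm_pow]
      _ ≤ 1 * (‖z‖ ^ p) := by gcongr
      _ = ‖z‖ ^ p := one_mul _
      _ < 1 := h1
  have hne : ∀ z : ℂ, z ∈ Metric.ball (0 : ℂ) 1 → 1 + t * z ^ p ≠ 0 := by
    intro z hz h
    have h2 : t * z ^ p = -1 := by linear_combination h
    have := hsmall z hz
    rw [h2] at this
    simp at this
  have pow_id : ∀ z ∈ Metric.ball (0 : ℂ) 1,
      (z * Complex.exp (-(2 / (p : ℂ)) * Complex.log (1 + t * z ^ p))) ^ p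
        = z ^ p / (1 + t * z ^ p) ^ 2 := by
    intro z hz
    have hnz := hne z hz
    rw [mul_pow, ← Complex.exp_nat_mul]
    have harg : (p : ℂ) * (-(2 / (p : ℂ)) * Complex.log (1 + t * z ^ p))
        = ((-2 : ℤ) : ℂ) * Complex.log (1 + t * z ^ p) := by
      field_simp
      ring
    rw [harg, Complex.exp_int_mul, Complex.exp_log hnz, zpow_neg, ← div_eq_mul_inv]
    norm_cast
  refine ⟨?_, pow_id⟩
  intro z1 hz1 z2 hz2 heq
  simp only at heq
  have hpow : z1 ^ p / (1 + t * z1 ^ p) ^ 2 = z2 ^ p / (1 + t * z2 ^ p) ^ 2 := by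
    rw [← pow_id z1 hz1, ← pow_id z2 hz2, heq]
  have h1 := hne z1 hz1
  have h2 := hne z2 hz2
  have hcross : z1 ^ p * (1 + t * z2 ^ p) ^ 2 = z2 ^ p * (1 + t * z1 ^ p) ^ 2 := by
    rw [div_eq_div_iff (pow_ne_zero 2 h1) (pow_ne_zero 2 h2)] at hpow
    linear_combination hpow
  have hfac : (z1 ^ p - z2 ^ p) * (1 - t ^ 2 * z1 ^ p * z2 ^ p) = 0 := by
    linear_combination hcross
  have hsecond : (1 - t ^ 2 * z1 ^ p * z2 ^ p) ≠ 0 := by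
    intro h
    have heq1 : t ^ 2 * z1 ^ p * z2 ^ p = 1 := by linear_combination -h
    have habs : ‖t ^ 2 * z1 ^ p * z2 ^ p‖ < 1 := by
      rw [mem_ball_zero_iff] at hz1 hz2
      have ha1 : ‖z1‖ ^ p < 1 := pow_lt_one₀ (norm_nonneg _) hz1 (by omega)
      have ha2 : ‖z2‖ ^ p ≤ 1 := pow_le_one₀ (norm_nonneg _) hz2.le
      have hat : ‖t‖ ^ 2 ≤ 1 := pow_le_one₀ (norm_nonneg _) ht
      calc ‖t ^ 2 * z1 ^ p * z2 ^ p‖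
          = ‖t‖ ^ 2 * ‖z1‖ ^ p * ‖z2‖ ^ p := by
            rw [norm_mul, norm_mul, norm_pow, norm_pow, norm_pow]
        _ ≤ 1 * ‖z1‖ ^ p * 1 := by gcongr
        _ = ‖z1‖ ^ p := by ring
        _ < 1 := ha1
    rw [heq1] at habs
    simp at habs
  have hzp : z1 ^ p = z2 ^ p := by
    rcases mul_eq_zero.mp hfac with h | h
    · linear_combination h
    · exact absurd h hsecond
  rw [hzp] at heq
  exact mul_right_cancel₀ (Complex.exp_ne_zero _) heq
end

section
/- Let D = {z ∈ ℂ : Re z > 0 and |z² − 1| < 1} be the right-hand domain bounded by the Bernoulli lemniscate |z² − 1| = 1. Then the polynomials P_n(z) = 2√((n+1)/π) · z · (z² − 1)^n, n = 0, 1, 2, …, form an orthonormal system in L²(D): for all integers m, n ≥ 0, ∬_D P_m(z) · conj(P_n(z)) dx dy equals 1 if m = n and 0 otherwise; equivalently, ∬_D z(z²−1)^m · conj(z(z²−1)^n) dx dy = δ_{mn} · π/(4(n+1)). -/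
open Complex MeasureTheory


noncomputable def D : Set ℂ := {z : ℂ | 0 < z.re ∧ ‖z ^ 2 - 1‖ < 1}

lemma D_open : IsOpen D := by
  apply IsOpen.inter
  · exact isOpen_lt continuous_const Complex.continuous_re
  · exact isOpen_lt (continuous_norm.comp ((continuous_pow 2).sub continuous_const))
      continuous_const

lemma sq_injOn : Set.InjOn (fun z : ℂ => z ^ 2) D := by
  intro z hz w hw h
  have h1 : (z - w) * (z + w) = 0 := by simp only at h; linear_combination h
  have h2 : z + w ≠ 0 := by
    intro hc
    have := congrArg Complex.re hc
    simp [Complex.add_re] at this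
    linarith [hz.1, hw.1]
  rcases mul_eq_zero.mp h1 with h3 | h3
  · exact sub_eq_zero.mp h3
  · exact absurd h3 h2

lemma sq_image : (fun z : ℂ => z ^ 2) '' D = Metric.ball (1:ℂ) 1 := by
  ext w
  constructor
  · rintro ⟨z, hz, rfl⟩
    rw [Metric.mem_ball, Complex.dist_eq]
    exact hz.2
  · intro hw
    rw [Metric.mem_ball, Complex.dist_eq] at hw
    have hslit : w ∈ Complex.slitPlane := by
      rw [Complex.mem_slitPlane_iff]
      by_contra hc
      push_neg at hc
      obtain ⟨h1, h2⟩ := hc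
      have h3 : (w - 1).re ≤ -1 := by simp [Complex.sub_re]; linarith
      have h4 : |(w - 1).re| ≤ ‖w - 1‖ := Complex.abs_re_le_norm _
      rw [abs_le] at h4
      linarith [h4.1]
    have hw0 : w ≠ 0 := Complex.slitPlane_ne_zero hslit
    have hsq : Complex.exp (((2⁻¹ : ℝ) : ℂ) * Complex.log w) ^ 2 = w := by
      rw [show (2:ℕ) = 2 from rfl, ← Complex.exp_nat_mul,
        show ((2:ℕ):ℂ) * ((((2⁻¹:ℝ):ℂ)) * Complex.log w) = Complex.log w by push_cast; ring,
        Complex.exp_log hw0]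
    refine ⟨Complex.exp (((2⁻¹ : ℝ) : ℂ) * Complex.log w), ⟨?_, ?_⟩, hsq⟩
    · rw [Complex.exp_re]
      apply mul_pos (Real.exp_pos _)
      have him : ((((2⁻¹:ℝ):ℂ)) * Complex.log w).im = 2⁻¹ * Complex.arg w := by
        simp [Complex.mul_im, Complex.log_im]
      rw [him]
      apply Real.cos_pos_of_mem_Ioo
      have h1 := Complex.neg_pi_lt_arg w
      have h2 : Complex.arg w < Real.pi :=
        lt_of_le_of_ne (Complex.arg_le_pi w) (Complex.slitPlane_arg_ne_pi hslit)
      exact Set.mem_Ioo.mpr ⟨by linarith, by linarith⟩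
    · rw [hsq]
      exact hw

lemma det_smul_restrict (a : ℂ) :
    (((1 : ℂ →L[ℂ] ℂ).smulRight a).restrictScalars ℝ).det = Complex.normSq a := by
  have h : ((((1 : ℂ →L[ℂ] ℂ).smulRight a).restrictScalars ℝ) : ℂ →ₗ[ℝ] ℂ)
      = Algebra.lmul ℝ ℂ a := by
    ext x
    simp [mul_comm]
  rw [ContinuousLinearMap.det, h, ← Algebra.norm_apply, Algebra.norm_complex_apply]

lemma ball_translate (g : ℂ → ℂ) :
    (∫ w in Metric.ball (1:ℂ) 1, g w) = ∫ u in Metric.ball (0:ℂ) 1, g (u + 1) := by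
  have hmp : MeasurePreserving (fun u : ℂ => u + 1) volume volume :=
    measurePreserving_add_right volume 1
  have hemb : MeasurableEmbedding (fun u : ℂ => u + 1) :=
    (Homeomorph.addRight (1:ℂ)).measurableEmbedding
  have hpre : (fun u : ℂ => u + 1) ⁻¹' (Metric.ball (1:ℂ) 1) = Metric.ball (0:ℂ) 1 := by
    ext u
    simp [Metric.mem_ball, Complex.dist_eq]
  rw [← hmp.setIntegral_preimage_emb hemb g (Metric.ball (1:ℂ) 1), hpre]

lemma ang_int (k : ℤ) (hk : k ≠ 0) :
    (∫ θ in Set.Ioo (-Real.pi) Real.pi, Complex.exp (k * θ * Complex.I)) = 0 := by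
  rw [← integral_Ioc_eq_integral_Ioo,
    ← intervalIntegral.integral_of_le (by linarith [Real.pi_pos] : -Real.pi ≤ Real.pi)]
  have hc : (k : ℂ) * Complex.I ≠ 0 := by
    simp [Complex.I_ne_zero, hk]
  have h0 : ∀ θ : ℝ, Complex.exp ((k:ℂ) * θ * Complex.I) = Complex.exp ((k:ℂ) * Complex.I * θ) := by
    intro θ; ring_nf
  simp_rw [h0]
  rw [integral_exp_mul_complex hc]
  have h1 : (k:ℂ) * Complex.I * (Real.pi:ℂ) = k * ((Real.pi:ℂ) * Complex.I) := by ring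
  have h2 : (k:ℂ) * Complex.I * ((-Real.pi:ℝ):ℂ) = ((-k : ℤ) : ℂ) * ((Real.pi:ℂ) * Complex.I) := by
    push_cast; ring
  rw [h1, h2, Complex.exp_int_mul, Complex.exp_int_mul, Complex.exp_pi_mul_I]
  have h3 : ((-1 : ℂ)) ^ (-k) = (-1:ℂ) ^ k := by
    have hne : ((-1:ℂ)) ≠ 0 := by norm_num
    rw [zpow_neg, inv_eq_one_div, div_eq_iff (zpow_ne_zero k hne), ← zpow_add₀ hne,
      ← two_mul, zpow_mul]
    norm_num
  rw [h3, sub_self, zero_div]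

lemma disk_int (m n : ℕ) :
    (∫ z in Metric.ball (0:ℂ) 1, z ^ m * (starRingEnd ℂ) z ^ n)
      = if m = n then ((Real.pi : ℂ) / ((n:ℂ) + 1)) else 0 := by
  classical
  set k : ℤ := (m : ℤ) - n with hk
  set g : ℂ → ℂ := fun z => z ^ m * (starRingEnd ℂ) z ^ n with hg
  have h1 : (∫ z in Metric.ball (0:ℂ) 1, g z) = ∫ z, (Metric.ball (0:ℂ) 1).indicator g z := by
    rw [integral_indicator measurableSet_ball]
  rw [h1, ← Complex.integral_comp_polarCoord_symm]
  have h2 : ∀ p ∈ Set.Ioi (0:ℝ) ×ˢ Set.Ioo (-Real.pi) Real.pi,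
      p.1 • (Metric.ball (0:ℂ) 1).indicator g (Complex.polarCoord.symm p)
        = (Set.Ioo (0:ℝ) 1 ×ˢ Set.Ioo (-Real.pi) Real.pi).indicator
            (fun p : ℝ × ℝ => ((p.1 : ℂ) ^ (m + n + 1)) * Complex.exp ((k:ℂ) * p.2 * Complex.I)) p := by
    intro p hp
    obtain ⟨hr, hθ⟩ := hp
    have habs : ‖(Complex.polarCoord.symm p : ℂ)‖ = p.1 := by
      rw [Complex.norm_polarCoord_symm, abs_of_pos hr]
    by_cases h : p.1 < 1
    · have hmem : Complex.polarCoord.symm p ∈ Metric.ball (0:ℂ) 1 := by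
        rw [mem_ball_zero_iff, habs]; exact h
      have hmem' : p ∈ Set.Ioo (0:ℝ) 1 ×ˢ Set.Ioo (-Real.pi) Real.pi :=
        ⟨⟨hr, h⟩, hθ⟩
      rw [Set.indicator_of_mem hmem, Set.indicator_of_mem hmem']
      have hsymm : (Complex.polarCoord.symm p : ℂ) = (p.1 : ℂ) * Complex.exp ((p.2:ℂ) * Complex.I) := by
        rw [Complex.polarCoord_symm_apply, Complex.exp_mul_I]
        push_cast
        ring
      have hconj : (starRingEnd ℂ) ((p.1:ℂ) * Complex.exp ((p.2:ℂ) * Complex.I))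
          = (p.1:ℂ) * Complex.exp ((p.2:ℂ) * -Complex.I) := by
        rw [map_mul, Complex.conj_ofReal, ← Complex.exp_conj]
        congr 1
        simp [Complex.conj_I]
      have hexp : Complex.exp ((m:ℂ) * ((p.2:ℂ) * Complex.I))
            * Complex.exp ((n:ℂ) * ((p.2:ℂ) * -Complex.I))
          = Complex.exp ((k:ℂ) * p.2 * Complex.I) := by
        rw [← Complex.exp_add]
        congr 1
        rw [hk]
        push_cast
        ring
      rw [hg]
      simp only [hsymm, hconj]
      rw [mul_pow, mul_pow, ← Complex.exp_nat_mul, ← Complex.exp_nat_mul,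
        Complex.real_smul, ← hexp]
      ring
    · have hnm : Complex.polarCoord.symm p ∉ Metric.ball (0:ℂ) 1 := by
        rw [mem_ball_zero_iff, habs]
        exact fun hc => h hc
      have hnm' : p ∉ Set.Ioo (0:ℝ) 1 ×ˢ Set.Ioo (-Real.pi) Real.pi := by
        intro hc; exact h hc.1.2
      rw [Set.indicator_of_notMem hnm, Set.indicator_of_notMem hnm', smul_zero]
  show (∫ p in Set.Ioi (0:ℝ) ×ˢ Set.Ioo (-Real.pi) Real.pi,
      p.1 • (Metric.ball (0:ℂ) 1).indicator g (Complex.polarCoord.symm p)) = _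
  rw [setIntegral_congr_fun ((isOpen_Ioi.prod isOpen_Ioo).measurableSet) h2]
  have hsub : Set.Ioo (0:ℝ) 1 ×ˢ Set.Ioo (-Real.pi) Real.pi
      ⊆ Set.Ioi (0:ℝ) ×ˢ Set.Ioo (-Real.pi) Real.pi :=
    Set.prod_mono (fun x hx => hx.1) (fun x hx => hx)
  rw [setIntegral_indicator ((isOpen_Ioo.prod isOpen_Ioo).measurableSet),
    Set.inter_eq_right.mpr hsub, Measure.volume_eq_prod,
    setIntegral_prod_mul (fun r : ℝ => (r:ℂ) ^ (m+n+1))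
      (fun θ : ℝ => Complex.exp ((k:ℂ) * θ * Complex.I))]
  by_cases hmn : m = n
  · subst hmn
    have hk0 : k = 0 := by simp [hk]
    simp only [hk0, Int.cast_zero, zero_mul, Complex.exp_zero]
    rw [if_true]
    have hr : (∫ r in Set.Ioo (0:ℝ) 1, (r:ℂ) ^ (m+m+1))
        = ((1 : ℝ) / (m + m + 2) : ℝ) := by
      have h3 : (∫ r in Set.Ioo (0:ℝ) 1, (r:ℂ) ^ (m+m+1))
          = ((∫ r in Set.Ioo (0:ℝ) 1, r ^ (m+m+1) : ℝ) : ℂ) := by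
        rw [show ((∫ r in Set.Ioo (0:ℝ) 1, r ^ (m+m+1) : ℝ) : ℂ)
            = (∫ r in Set.Ioo (0:ℝ) 1, r ^ (m+m+1) : ℝ) • (1:ℂ) by
          rw [Complex.real_smul, mul_one], ← integral_smul_const]
        congr 1
        ext r
        rw [Complex.real_smul, mul_one, Complex.ofReal_pow]
      rw [h3, ← integral_Ioc_eq_integral_Ioo,
        ← intervalIntegral.integral_of_le (by norm_num : (0:ℝ) ≤ 1), integral_pow]
      norm_num
      ring
    have hθ : (∫ θ in Set.Ioo (-Real.pi) Real.pi, (1:ℂ)) = ((2 * Real.pi : ℝ) : ℂ) := by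
      rw [setIntegral_const, Real.volume_real_Ioo_of_le (by linarith [Real.pi_pos]),
        show Real.pi - -Real.pi = 2 * Real.pi by ring,
        Complex.real_smul, mul_one]
    rw [hr, hθ]
    have hm1 : ((m:ℂ) + 1) ≠ 0 := by
      rw [show ((m:ℂ) + 1) = ((m + 1 : ℕ) : ℂ) by push_cast; ring]
      exact_mod_cast Nat.succ_ne_zero m
    have hm2 : ((m:ℂ) + m + 2) ≠ 0 := by
      rw [show ((m:ℂ) + m + 2) = ((m + m + 2 : ℕ) : ℂ) by push_cast; ring]
      exact_mod_cast Nat.succ_ne_zero (m + m + 1)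
    push_cast
    field_simp
    have h2m : (2 + (m:ℂ) * 2) ≠ 0 := by
      rw [show (2 + (m:ℂ) * 2) = 2 * ((m:ℂ) + 1) by ring]; exact mul_ne_zero two_ne_zero hm1
    linear_combination mul_inv_cancel₀ h2m
  · have hkne : k ≠ 0 := by
      rw [hk, sub_ne_zero]
      exact_mod_cast hmn
    rw [ang_int k hkne, mul_zero, if_neg hmn]


lemma key_int (m n : ℕ) :
    (∫ z in D, (z * (z ^ 2 - 1) ^ m) * (starRingEnd ℂ) (z * (z ^ 2 - 1) ^ n))
      = if m = n then ((Real.pi : ℂ) / (4 * ((n : ℂ) + 1))) else 0 := by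
  classical
  set g : ℂ → ℂ := fun w => (w - 1) ^ m * ((starRingEnd ℂ) (w - 1)) ^ n with hg
  set f' : ℂ → (ℂ →L[ℝ] ℂ) :=
    fun z => ((1 : ℂ →L[ℂ] ℂ).smulRight (2 * z)).restrictScalars ℝ with hf'def
  set Iv : ℂ := ∫ z in D, (z * (z ^ 2 - 1) ^ m) * (starRingEnd ℂ) (z * (z ^ 2 - 1) ^ n) with hIv
  have hf' : ∀ z ∈ D, HasFDerivWithinAt (fun z : ℂ => z ^ 2) (f' z) D z := by
    intro z _
    have h0 : HasDerivAt (fun z : ℂ => z ^ 2) (2 * z) z := by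
      simpa using hasDerivAt_pow 2 z
    exact (h0.hasFDerivAt.restrictScalars ℝ).hasFDerivWithinAt
  have key := integral_image_eq_integral_abs_det_fderiv_smul volume
    D_open.measurableSet hf' sq_injOn g
  rw [sq_image, ball_translate] at key
  have hL : (∫ u in Metric.ball (0:ℂ) 1, g (u + 1))
      = if m = n then ((Real.pi : ℂ) / ((n:ℂ) + 1)) else 0 := by
    rw [← disk_int m n]
    congr 1
    ext u
    simp [hg]
  have hR : (∫ z in D, |(f' z).det| • g (z ^ 2)) = (4:ℂ) * Iv := by
    rw [hIv, ← integral_const_mul]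
    apply setIntegral_congr_fun D_open.measurableSet
    intro z _
    have hdet : (f' z).det = Complex.normSq (2 * z) := det_smul_restrict (2 * z)
    show |(f' z).det| • g (z ^ 2)
        = 4 * ((z * (z ^ 2 - 1) ^ m) * (starRingEnd ℂ) (z * (z ^ 2 - 1) ^ n))
    rw [hdet, _root_.abs_of_nonneg (Complex.normSq_nonneg _), Complex.real_smul,
      ← Complex.mul_conj]
    simp only [hg, map_mul, map_pow, map_ofNat]
    ring
  rw [hL, hR] at key
  have h4 : (4:ℂ) ≠ 0 := by norm_num
  have hn1 : ((n:ℂ) + 1) ≠ 0 := by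
    rw [show ((n:ℂ) + 1) = ((n + 1 : ℕ) : ℂ) by push_cast; ring]
    exact_mod_cast Nat.succ_ne_zero n
  by_cases hmn : m = n
  · rw [if_pos hmn] at key ⊢
    rw [div_eq_iff hn1] at key
    rw [eq_div_iff (mul_ne_zero h4 hn1)]
    linear_combination -key
  · rw [if_neg hmn] at key ⊢
    linear_combination (-1/4 : ℂ) * key

/-- **Orthonormal system on the Bernoulli lemniscate domain.**
On the right-hand domain `D = {Re z > 0, |z² − 1| < 1}` bounded by the Bernoulli
lemniscate, the polynomials `P_n(z) = 2√((n+1)/π)·z(z² − 1)ⁿ` form an orthonormal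
system in `L²(D)`; equivalently
`∬_D z(z²−1)ᵐ·conj(z(z²−1)ⁿ) dx dy = δ_{mn}·π/(4(n+1))`. -/
theorem lemniscate_orthonormal_system :
    (∀ m n : ℕ,
      (∫ z in {z : ℂ | 0 < z.re ∧ ‖z ^ 2 - 1‖ < 1},
          (z * (z ^ 2 - 1) ^ m) * (starRingEnd ℂ) (z * (z ^ 2 - 1) ^ n))
        = if m = n then ((Real.pi : ℂ) / (4 * ((n : ℂ) + 1))) else 0) ∧
    (∀ m n : ℕ,
      (∫ z in {z : ℂ | 0 < z.re ∧ ‖z ^ 2 - 1‖ < 1},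
          ((2 * Real.sqrt (((m : ℝ) + 1) / Real.pi) : ℝ) : ℂ) * (z * (z ^ 2 - 1) ^ m) *
            (starRingEnd ℂ)
              (((2 * Real.sqrt (((n : ℝ) + 1) / Real.pi) : ℝ) : ℂ) * (z * (z ^ 2 - 1) ^ n)))
        = if m = n then 1 else 0) := by
  constructor
  · intro m n
    exact key_int m n
  · intro m n
    have hpt : ∀ z : ℂ,
        ((2 * Real.sqrt (((m : ℝ) + 1) / Real.pi) : ℝ) : ℂ) * (z * (z ^ 2 - 1) ^ m) *
          (starRingEnd ℂ)
            (((2 * Real.sqrt (((n : ℝ) + 1) / Real.pi) : ℝ) : ℂ) * (z * (z ^ 2 - 1) ^ n))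
        = (((2 * Real.sqrt (((m : ℝ) + 1) / Real.pi)) * (2 * Real.sqrt (((n : ℝ) + 1) / Real.pi)) : ℝ) : ℂ)
            * ((z * (z ^ 2 - 1) ^ m) * (starRingEnd ℂ) (z * (z ^ 2 - 1) ^ n)) := by
      intro z
      rw [map_mul, Complex.conj_ofReal]
      push_cast
      ring
    simp_rw [hpt]
    rw [integral_const_mul]
    rw [show (∫ z in {z : ℂ | 0 < z.re ∧ ‖z ^ 2 - 1‖ < 1},
        (z * (z ^ 2 - 1) ^ m) * (starRingEnd ℂ) (z * (z ^ 2 - 1) ^ n)) =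
        if m = n then ((Real.pi : ℂ) / (4 * ((n : ℂ) + 1))) else 0 from key_int m n]
    by_cases hmn : m = n
    · subst hmn
      rw [if_pos rfl, if_pos rfl]
      have hsq : Real.sqrt (((m : ℝ) + 1) / Real.pi) * Real.sqrt (((m : ℝ) + 1) / Real.pi)
          = ((m : ℝ) + 1) / Real.pi :=
        Real.mul_self_sqrt (by positivity)
      have hpi : (Real.pi : ℂ) ≠ 0 := by
        exact_mod_cast Real.pi_ne_zero
      have hm1 : ((m:ℂ) + 1) ≠ 0 := by
        rw [show ((m:ℂ) + 1) = ((m + 1 : ℕ) : ℂ) by push_cast; ring]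
        exact_mod_cast Nat.succ_ne_zero m
      rw [show ((2 * Real.sqrt (((m : ℝ) + 1) / Real.pi)) * (2 * Real.sqrt (((m : ℝ) + 1) / Real.pi)) : ℝ)
          = 4 * (((m : ℝ) + 1) / Real.pi) by rw [mul_mul_mul_comm, hsq]; norm_num]
      push_cast
      field_simp
    · rw [if_neg hmn, if_neg hmn, mul_zero]
end
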